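/- (Bohnenblust–Spitzer formula) Let R be a commutative ring and let P : R → R be an additive Rota–Baxter operator of weight 1, i.e. P(x)P(y) = P(xP(y)) + P(P(x)y) + P(xy) for all x, y ∈ R. Let n ≥ 1 and s₁, …, sₙ ∈ R. Then ∑_{σ ∈ Sₙ} P(s_{σ(1)}·P(s_{σ(2)}·(⋯·P(s_{σ(n)})⋯))) = ∑_𝒯 (−1)^{n−|𝒯|} · (∏_{T ∈ 𝒯} (|T|−1)!) · ∏_{T ∈ 𝒯} P(∏_{j ∈ T} s_j), where the outer sum on the right runs over all unordered set partitions 𝒯 of {1, …, n} into nonempty blocks, |𝒯| is the number of blocks of 𝒯, and |T| is the size of the block T. -/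

import Mathlib

/-- The nested expression `P(s₁·P(s₂·(⋯·P(sₙ)⋯)))`: for the empty list it is `1`,
and for `s :: l` it is `P` of `s` times the nested expression of `l` (so for a
single element it is `P(s₁·1) = P(s₁)`). -/
def nestedRB {R : Type*} [CommRing R] (P : R → R) : List R → R
  | [] => 1
  | s :: l => P (s * nestedRB P l)

open Finset

namespace BS

variable {R : Type*} [CommRing R]

section basic
variable {P : R → R}

lemma P_zero (hadd : ∀ x y : R, P (x + y) = P x + P y) : P 0 = 0 := by
  have := hadd 0 0
  simp at this
  linear_combination this

lemma P_sum (hadd : ∀ x y : R, P (x + y) = P x + P y) {ι : Type*} (s : Finset ι) (f : ι → R) :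
    P (∑ x ∈ s, f x) = ∑ x ∈ s, P (f x) := by
  classical
  induction s using Finset.induction_on with
  | empty => simpa using P_zero hadd
  | insert _ _ h ih => rw [sum_insert h, sum_insert h, hadd, ih]

end basic

variable (P : R → R)

section sumNest
variable {κ : Type*} [DecidableEq κ]

def sumNestAux : ℕ → (κ → R) → Finset κ → R
  | 0, _, _ => 1
  | m+1, y, U => ∑ t ∈ U, P (y t * sumNestAux m y (U.erase t))

def sumNest (y : κ → R) (U : Finset κ) : R := sumNestAux P U.card y U

@[simp] lemma sumNest_empty (y : κ → R) : sumNest P y ∅ = 1 := rfl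

lemma sumNestAux_congr (m : ℕ) {y y' : κ → R} {U : Finset κ} (h : ∀ t ∈ U, y t = y' t) :
    sumNestAux P m y U = sumNestAux P m y' U := by
  induction m generalizing U with
  | zero => rfl
  | succ m ih =>
    simp only [sumNestAux]
    exact sum_congr rfl fun t ht => by
      rw [h t ht, ih fun u hu => h u (mem_of_mem_erase hu)]

lemma sumNest_congr {y y' : κ → R} {U : Finset κ} (h : ∀ t ∈ U, y t = y' t) :
    sumNest P y U = sumNest P y' U := sumNestAux_congr P _ h

lemma sumNest_nonempty (y : κ → R) {U : Finset κ} (hU : U.Nonempty) :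
    sumNest P y U = ∑ t ∈ U, P (y t * sumNest P y (U.erase t)) := by
  obtain ⟨m, hm⟩ : ∃ m, U.card = m + 1 :=
    ⟨U.card - 1, (Nat.succ_pred_eq_of_pos (card_pos.2 hU)).symm⟩
  unfold sumNest
  rw [hm]
  show ∑ t ∈ U, P (y t * sumNestAux P m y (U.erase t)) = _
  refine sum_congr rfl fun t ht => ?_
  rw [card_erase_of_mem ht, hm]
  rfl

lemma sumNestAux_image {κ' : Type*} [DecidableEq κ'] (m : ℕ) (y : κ' → R) (g : κ → κ')
    {U : Finset κ} (hg : Set.InjOn g U) :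
    sumNestAux P m y (U.image g) = sumNestAux P m (fun t => y (g t)) U := by
  induction m generalizing U with
  | zero => rfl
  | succ m ih =>
    simp only [sumNestAux]
    rw [sum_image fun a ha b hb => hg ha hb]
    refine sum_congr rfl fun t ht => ?_
    have himg : (U.image g).erase (g t) = (U.erase t).image g := by
      ext u
      simp only [mem_erase, mem_image]
      constructor
      · rintro ⟨hne, a, ha, rfl⟩
        exact ⟨a, ⟨fun h => hne (by rw [h]), ha⟩, rfl⟩
      · rintro ⟨a, ⟨hat, ha⟩, rfl⟩
        exact ⟨fun h => hat (hg ha ht h), a, ha, rfl⟩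
    rw [himg, ih (hg.mono (fun x hx => mem_of_mem_erase hx))]

lemma sumNest_image {κ' : Type*} [DecidableEq κ'] (y : κ' → R) (g : κ → κ')
    {U : Finset κ} (hg : Set.InjOn g U) :
    sumNest P y (U.image g) = sumNest P (fun t => y (g t)) U := by
  unfold sumNest
  rw [card_image_of_injOn hg, sumNestAux_image P _ _ _ hg]

end sumNest


section ins
variable {κ : Type*} [DecidableEq κ]

lemma ins (hadd : ∀ x y : R, P (x + y) = P x + P y)
    (hP : ∀ x y : R, P x * P y = P (x * P y) + P (P x * y) + P (x * y))
    (n : ℕ) (y : κ → R) (k : κ) :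
    ∀ (U : Finset κ), U.card = n → k ∉ U →
      P (y k) * sumNest P y U =
        sumNest P y (insert k U) +
          ∑ t ∈ U, sumNest P (Function.update y t (y k * y t)) U := by
  induction n with
  | zero =>
    intro U hcard hk
    rw [card_eq_zero] at hcard
    subst hcard
    rw [sumNest_empty, insert_empty_eq, sumNest_nonempty P y (singleton_nonempty k)]
    simp [mul_one]
  | succ n ih =>
    intro U hcard hk
    have hU : U.Nonempty := card_pos.1 (hcard ▸ n.succ_pos)
    -- expand the left side with the Rota–Baxter identity
    have hBig :
        P (y k) * sumNest P y U =
          (∑ t ∈ U, P (y k * P (y t * sumNest P y (U.erase t)))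
            + ∑ t ∈ U, P (P (y k) * (y t * sumNest P y (U.erase t))))
          + ∑ t ∈ U, P (y k * (y t * sumNest P y (U.erase t))) := by
      rw [sumNest_nonempty P y hU, mul_sum, ← sum_add_distrib, ← sum_add_distrib]
      exact sum_congr rfl fun t ht => hP _ _
    have hS1 : ∑ t ∈ U, P (y k * P (y t * sumNest P y (U.erase t)))
        = P (y k * sumNest P y U) := by
      conv_rhs => rw [sumNest_nonempty P y hU, mul_sum, P_sum hadd]
    have hS2 : ∑ t ∈ U, P (P (y k) * (y t * sumNest P y (U.erase t)))
        = ∑ t ∈ U, P (y t * sumNest P y (insert k (U.erase t)))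
          + ∑ t ∈ U, ∑ u ∈ U.erase t,
              P (y t * sumNest P (Function.update y u (y k * y u)) (U.erase t)) := by
      rw [← sum_add_distrib]
      refine sum_congr rfl fun t ht => ?_
      have hk' : k ∉ U.erase t := fun h => hk (mem_of_mem_erase h)
      have hc' : (U.erase t).card = n := by
        rw [card_erase_of_mem ht, hcard]
        rfl
      have hih := ih (U.erase t) hc' hk'
      have h1 : P (y k) * (y t * sumNest P y (U.erase t))
          = y t * (P (y k) * sumNest P y (U.erase t)) := by ring
      rw [h1, hih, mul_add, hadd, mul_sum, P_sum hadd]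
    have hT1 : sumNest P y (insert k U)
        = P (y k * sumNest P y U)
          + ∑ t ∈ U, P (y t * sumNest P y (insert k (U.erase t))) := by
      rw [sumNest_nonempty P y (insert_nonempty k U), sum_insert hk, erase_insert hk]
      congr 1
      refine sum_congr rfl fun t ht => ?_
      rw [erase_insert_of_ne (fun h : k = t => hk (h ▸ ht))]
    have hT2 : ∑ u ∈ U, sumNest P (Function.update y u (y k * y u)) U
        = ∑ u ∈ U, P (y k * (y u * sumNest P y (U.erase u)))
          + ∑ u ∈ U, ∑ t ∈ U.erase u,
              P (y t * sumNest P (Function.update y u (y k * y u)) (U.erase t)) := by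
      rw [← sum_add_distrib]
      refine sum_congr rfl fun u hu => ?_
      rw [sumNest_nonempty P _ hU, ← Finset.add_sum_erase U _ hu]
      congr 1
      · have hcong : sumNest P (Function.update y u (y k * y u)) (U.erase u)
            = sumNest P y (U.erase u) :=
          sumNest_congr P fun x hx => Function.update_of_ne (mem_erase.1 hx).1 _ _
        rw [Function.update_self, hcong, mul_assoc]
      · refine sum_congr rfl fun t ht => ?_
        rw [Function.update_of_ne (mem_erase.1 ht).1]
    have hswap : ∑ t ∈ U, ∑ u ∈ U.erase t,
          P (y t * sumNest P (Function.update y u (y k * y u)) (U.erase t))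
        = ∑ u ∈ U, ∑ t ∈ U.erase u,
          P (y t * sumNest P (Function.update y u (y k * y u)) (U.erase t)) := by
      refine sum_comm' fun x u => ?_
      simp only [mem_erase]
      constructor
      · rintro ⟨hx, hux, hu⟩
        exact ⟨⟨Ne.symm hux, hx⟩, hu⟩
      · rintro ⟨⟨hxu, hx⟩, hu⟩
        exact ⟨hx, Ne.symm hxu, hu⟩
    rw [hBig, hS1, hS2, hT1, hT2, hswap]
    abel

end ins


section partitions
variable {ι : Type*} [DecidableEq ι]

def IsPartition (S : Finset ι) (𝒯 : Finset (Finset ι)) : Prop :=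
  (∀ T ∈ 𝒯, T.Nonempty) ∧ (∀ T ∈ 𝒯, ∀ T' ∈ 𝒯, T ≠ T' → Disjoint T T') ∧ 𝒯.sup id = S

open Classical in
noncomputable def partitionsOf (S : Finset ι) : Finset (Finset (Finset ι)) :=
  S.powerset.powerset.filter (IsPartition S)

lemma mem_partitionsOf {S : Finset ι} {𝒯 : Finset (Finset ι)} :
    𝒯 ∈ partitionsOf S ↔ IsPartition S 𝒯 := by
  classical
  unfold partitionsOf
  rw [Finset.mem_filter, mem_powerset]
  constructor
  · exact fun h => h.2
  · intro h
    refine ⟨fun T hT => ?_, h⟩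
    have h2 := Finset.le_sup (f := (id : Finset ι → Finset ι)) hT
    rw [h.2.2] at h2
    exact mem_powerset.2 h2

namespace IsPartition

variable {S : Finset ι} {𝒯 : Finset (Finset ι)} (h : IsPartition S 𝒯)
include h

lemma nonempty_mem {T : Finset ι} (hT : T ∈ 𝒯) : T.Nonempty := h.1 T hT

lemma subset_mem {T : Finset ι} (hT : T ∈ 𝒯) : T ⊆ S := by
  have h2 := Finset.le_sup (f := (id : Finset ι → Finset ι)) hT
  rw [h.2.2] at h2
  exact h2

lemma empty_not_mem : ∅ ∉ 𝒯 := fun hc => by simpa using h.1 _ hc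

lemma pairwiseDisjoint : (↑𝒯 : Set (Finset ι)).PairwiseDisjoint id :=
  fun T hT T' hT' hne => h.2.1 T hT T' hT' hne

lemma sum_partition {M : Type*} [AddCommMonoid M] (f : ι → M) :
    ∑ x ∈ S, f x = ∑ T ∈ 𝒯, ∑ x ∈ T, f x := by
  rw [← h.2.2, sup_eq_biUnion, sum_biUnion h.pairwiseDisjoint]
  exact sum_congr rfl fun T hT => rfl

lemma prod_partition (f : ι → R) :
    ∏ x ∈ S, f x = ∏ T ∈ 𝒯, ∏ x ∈ T, f x := by
  rw [← h.2.2, sup_eq_biUnion, prod_biUnion h.pairwiseDisjoint]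
  exact prod_congr rfl fun T hT => rfl

lemma sum_card : ∑ T ∈ 𝒯, T.card = S.card := by
  calc ∑ T ∈ 𝒯, T.card = ∑ T ∈ 𝒯, ∑ _x ∈ T, 1 := by
        exact sum_congr rfl fun T hT => card_eq_sum_ones T
    _ = ∑ _x ∈ S, 1 := (h.sum_partition _).symm
    _ = S.card := (card_eq_sum_ones S).symm

lemma card_le : 𝒯.card ≤ S.card := by
  rw [← h.sum_card, card_eq_sum_ones]
  exact sum_le_sum fun T hT => card_pos.2 (h.nonempty_mem hT)

lemma unique_block {x : ι} {T T' : Finset ι} (hT : T ∈ 𝒯) (hT' : T' ∈ 𝒯)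
    (hx : x ∈ T) (hx' : x ∈ T') : T = T' := by
  by_contra hne
  exact (Finset.disjoint_left.1 (h.2.1 T hT T' hT' hne)) hx hx'

lemma exists_block {x : ι} (hx : x ∈ S) : ∃ T ∈ 𝒯, x ∈ T := by
  rw [← h.2.2] at hx
  simpa using Finset.mem_sup.1 hx

lemma eq_singletons (hcard : 𝒯.card = S.card) : 𝒯 = S.image (fun x => {x}) := by
  have hone : ∀ T ∈ 𝒯, T.card = 1 := by
    by_contra hc
    push_neg at hc
    obtain ⟨T₀, hT₀, hT₀c⟩ := hc
    have h2 : 2 ≤ T₀.card := by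
      have h1 := card_pos.2 (h.nonempty_mem hT₀)
      omega
    have hlt : ∑ T ∈ 𝒯, (1 : ℕ) < ∑ T ∈ 𝒯, T.card := by
      refine sum_lt_sum (fun T hT => card_pos.2 (h.nonempty_mem hT)) ⟨T₀, hT₀, by omega⟩
    rw [h.sum_card, ← card_eq_sum_ones, hcard] at hlt
    omega
  ext T
  simp only [mem_image]
  constructor
  · intro hT
    obtain ⟨x, hx⟩ := Finset.card_eq_one.1 (hone T hT)
    exact ⟨x, h.subset_mem hT (hx ▸ mem_singleton_self x), hx.symm⟩
  · rintro ⟨x, hx, rfl⟩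
    obtain ⟨T, hT, hxT⟩ := h.exists_block hx
    obtain ⟨z, hz⟩ := Finset.card_eq_one.1 (hone T hT)
    have hxz : x = z := by rw [hz] at hxT; simpa using hxT
    have hTx : T = {x} := by rw [hz, hxz]
    rwa [hTx] at hT

end IsPartition

lemma partitionsOf_empty : partitionsOf (∅ : Finset ι) = {∅} := by
  ext 𝒯
  rw [mem_partitionsOf, mem_singleton]
  constructor
  · intro h
    by_contra hne
    obtain ⟨T, hT⟩ := Finset.nonempty_of_ne_empty hne
    obtain ⟨x, hx⟩ := h.nonempty_mem hT
    exact absurd (h.subset_mem hT hx) (notMem_empty x)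
  · rintro rfl
    exact ⟨fun T hT => absurd hT (notMem_empty T), fun T hT => absurd hT (notMem_empty T),
      rfl⟩

lemma singletons_mem_partitionsOf (S : Finset ι) :
    S.image (fun x => ({x} : Finset ι)) ∈ partitionsOf S := by
  rw [mem_partitionsOf]
  refine ⟨?_, ?_, ?_⟩
  · intro T hT
    obtain ⟨x, _, rfl⟩ := mem_image.1 hT
    exact singleton_nonempty x
  · intro T hT T' hT' hne
    obtain ⟨x, _, rfl⟩ := mem_image.1 hT
    obtain ⟨x', _, rfl⟩ := mem_image.1 hT'
    simpa using fun hxx => hne (by rw [hxx])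
  · ext x
    rw [Finset.mem_sup]
    simp

end partitions


section PIL
variable {ι : Type*} [DecidableEq ι]

/-- The block of `𝒯` containing `i` (junk value if there is none). -/
def blockOf (𝒯 : Finset (Finset ι)) (i : ι) : Finset ι :=
  (𝒯.filter fun T => i ∈ T).sup id

lemma blockOf_eq {𝒯 : Finset (Finset ι)} {i : ι} {B : Finset ι} (hB : B ∈ 𝒯) (hiB : i ∈ B)
    (huniq : ∀ T ∈ 𝒯, i ∈ T → T = B) : blockOf 𝒯 i = B := by
  have hfil : 𝒯.filter (fun T => i ∈ T) = {B} := by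
    ext T
    rw [mem_filter, mem_singleton]
    exact ⟨fun ⟨hT, hiT⟩ => huniq T hT hiT, fun h => h ▸ ⟨hB, hiB⟩⟩
  rw [blockOf, hfil]
  simp

/-- Summing over partitions of `insert i S`, grouped by the block containing `i`. -/
lemma sum_partitionsOf_insert {M : Type*} [AddCommMonoid M] (F : Finset (Finset ι) → M)
    {S : Finset ι} {i : ι} (hi : i ∉ S) :
    ∑ 𝒯 ∈ partitionsOf (insert i S), F 𝒯 =
      ∑ Q ∈ partitionsOf S,
        (F (insert {i} Q) + ∑ T ∈ Q, F (insert (insert i T) (Q.erase T))) := by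
  classical
  have hRHS : ∀ Q ∈ partitionsOf S,
      F (insert {i} Q) + ∑ T ∈ Q, F (insert (insert i T) (Q.erase T))
        = ∑ o ∈ insert ∅ Q, F (insert (insert i o) (Q.erase o)) := by
    intro Q hQ
    rw [sum_insert (mem_partitionsOf.1 hQ).empty_not_mem,
      erase_eq_of_notMem (mem_partitionsOf.1 hQ).empty_not_mem, insert_empty_eq]
  rw [sum_congr rfl hRHS, sum_sigma' (partitionsOf S) (fun Q => insert ∅ Q)
    (fun Q o => F (insert (insert i o) (Q.erase o)))]
  set ψ : Finset (Finset ι) → (_ : Finset (Finset ι)) × Finset ι := fun 𝒯 =>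
      if blockOf 𝒯 i = {i} then ⟨𝒯.erase {i}, ∅⟩
      else ⟨insert ((blockOf 𝒯 i).erase i) (𝒯.erase (blockOf 𝒯 i)), (blockOf 𝒯 i).erase i⟩
    with hψ
  set φ : (_ : Finset (Finset ι)) × Finset ι → Finset (Finset ι) :=
      fun x => insert (insert i x.2) (x.1.erase x.2) with hφ
  -- basic facts about a partition of `insert i S`
  have key : ∀ 𝒯 ∈ partitionsOf (insert i S),
      ∃ B, blockOf 𝒯 i = B ∧ B ∈ 𝒯 ∧ i ∈ B ∧ (∀ T ∈ 𝒯, i ∈ T → T = B)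
        ∧ (∀ T ∈ 𝒯, T ≠ B → T ⊆ S) ∧ B.erase i ⊆ S := by
    intro 𝒯 h𝒯
    have h := mem_partitionsOf.1 h𝒯
    obtain ⟨B, hB, hiB⟩ := h.exists_block (mem_insert_self i S)
    have huniq : ∀ T ∈ 𝒯, i ∈ T → T = B := fun T hT hiT => h.unique_block hT hB hiT hiB
    have hsub : ∀ T ∈ 𝒯, T ≠ B → T ⊆ S := by
      intro T hT hne x hx
      rcases mem_insert.1 (h.subset_mem hT hx) with rfl | hxS
      · exact absurd (huniq T hT hx) hne
      · exact hxS
    refine ⟨B, blockOf_eq hB hiB huniq, hB, hiB, huniq, hsub, ?_⟩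
    intro x hx
    rcases mem_insert.1 (h.subset_mem hB (mem_of_mem_erase hx)) with rfl | hxS
    · exact absurd rfl (mem_erase.1 hx).1
    · exact hxS
  have hψ_mem : ∀ 𝒯 ∈ partitionsOf (insert i S),
      ψ 𝒯 ∈ (partitionsOf S).sigma (fun Q => insert ∅ Q) := by
    intro 𝒯 h𝒯
    have h := mem_partitionsOf.1 h𝒯
    obtain ⟨B, hbo, hB, hiB, huniq, hsub, hBei⟩ := key 𝒯 h𝒯
    rw [mem_sigma, hψ]
    beta_reduce
    by_cases hBi : blockOf 𝒯 i = {i}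
    · rw [if_pos hBi]
      rw [hbo] at hBi
      subst hBi
      refine ⟨mem_partitionsOf.2 ⟨fun T hT => h.nonempty_mem (mem_of_mem_erase hT),
        fun T hT T' hT' hne =>
          h.2.1 T (mem_of_mem_erase hT) T' (mem_of_mem_erase hT') hne, ?_⟩,
        mem_insert_self _ _⟩
      apply le_antisymm
      · exact Finset.sup_le fun T hT => hsub T (mem_of_mem_erase hT) (mem_erase.1 hT).1
      · intro x hx
        obtain ⟨T, hT, hxT⟩ := h.exists_block (mem_insert_of_mem hx)
        have hTne : T ≠ {i} := by
          rintro rfl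
          exact hi (mem_singleton.1 hxT ▸ hx)
        exact Finset.le_sup (f := (id : Finset ι → Finset ι)) (mem_erase.2 ⟨hTne, hT⟩) hxT
    · rw [if_neg hBi]
      rw [hbo] at hBi ⊢
      have hone : (B.erase i).Nonempty := by
        rcases (B.erase i).eq_empty_or_nonempty with he | hne
        · rcases (Finset.erase_eq_empty_iff _ _).1 he with h' | h'
          · exact absurd (h' ▸ hiB) (notMem_empty i)
          · exact absurd h' hBi
        · exact hne
      refine ⟨mem_partitionsOf.2 ⟨?_, ?_, ?_⟩, mem_insert_of_mem (mem_insert_self _ _)⟩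
      · intro T hT
        rcases mem_insert.1 hT with rfl | hT'
        · exact hone
        · exact h.nonempty_mem (mem_of_mem_erase hT')
      · intro T hT T' hT' hne
        rcases mem_insert.1 hT with rfl | hT2 <;> rcases mem_insert.1 hT' with h3 | hT3
        · exact absurd h3.symm hne
        · exact Finset.disjoint_of_subset_left (erase_subset i B)
            (h.2.1 B hB T' (mem_of_mem_erase hT3) (fun hc => (mem_erase.1 hT3).1 hc.symm))
        · exact h3 ▸ (Finset.disjoint_of_subset_right (erase_subset i B)
            (h.2.1 T (mem_of_mem_erase hT2) B hB (mem_erase.1 hT2).1))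
        · exact h.2.1 T (mem_of_mem_erase hT2) T' (mem_of_mem_erase hT3) hne
      · apply le_antisymm
        · refine Finset.sup_le fun T hT => ?_
          rcases mem_insert.1 hT with rfl | hT'
          · exact hBei
          · exact hsub T (mem_of_mem_erase hT') (mem_erase.1 hT').1
        · intro x hx
          obtain ⟨T, hT, hxT⟩ := h.exists_block (mem_insert_of_mem hx)
          by_cases hTB : T = B
          · subst hTB
            refine Finset.le_sup (f := (id : Finset ι → Finset ι))
              (mem_insert_self _ _) (mem_erase.2 ⟨fun hc => hi (hc ▸ hx), hxT⟩)
          · exact Finset.le_sup (f := (id : Finset ι → Finset ι))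
              (mem_insert_of_mem (mem_erase.2 ⟨hTB, hT⟩)) hxT
  have hφ_mem : ∀ x ∈ (partitionsOf S).sigma (fun Q => insert ∅ Q),
      φ x ∈ partitionsOf (insert i S) := by
    rintro ⟨Q, o⟩ hx
    rw [mem_sigma] at hx
    obtain ⟨hQ, ho⟩ := hx
    have h := mem_partitionsOf.1 hQ
    have hoS : o ⊆ S := by
      rcases mem_insert.1 ho with rfl | ho'
      · exact empty_subset S
      · exact h.subset_mem ho'
    have hio : i ∉ o := fun hc => hi (hoS hc)
    rw [mem_partitionsOf]
    refine ⟨?_, ?_, ?_⟩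
    · intro T hT
      rcases mem_insert.1 hT with rfl | hT'
      · exact insert_nonempty i o
      · exact h.nonempty_mem (mem_of_mem_erase hT')
    · intro T hT T' hT' hne
      have hdis : ∀ T' ∈ Q.erase o, Disjoint (insert i o) T' := by
        intro W hW
        rw [Finset.disjoint_insert_left]
        refine ⟨fun hc => hi (h.subset_mem (mem_of_mem_erase hW) hc), ?_⟩
        rcases mem_insert.1 ho with rfl | ho'
        · exact disjoint_empty_left W
        · exact h.2.1 o ho' W (mem_of_mem_erase hW) (fun hc => (mem_erase.1 hW).1 hc.symm)
      rcases mem_insert.1 hT with rfl | hT2 <;> rcases mem_insert.1 hT' with h3 | hT3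
      · exact absurd h3.symm hne
      · exact hdis T' hT3
      · exact h3 ▸ (hdis T hT2).symm
      · exact h.2.1 T (mem_of_mem_erase hT2) T' (mem_of_mem_erase hT3) hne
    · apply le_antisymm
      · refine Finset.sup_le fun T hT => ?_
        rcases mem_insert.1 hT with rfl | hT'
        · exact insert_subset_insert i hoS
        · exact (h.subset_mem (mem_of_mem_erase hT')).trans (subset_insert i S)
      · intro x hx
        rcases mem_insert.1 hx with rfl | hxS
        · exact Finset.le_sup (f := (id : Finset ι → Finset ι)) (mem_insert_self _ _)
            (mem_insert_self x o)
        · obtain ⟨T, hT, hxT⟩ := h.exists_block hxS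
          by_cases hTo : T = o
          · subst hTo
            exact Finset.le_sup (f := (id : Finset ι → Finset ι)) (mem_insert_self _ _)
              (mem_insert_of_mem hxT)
          · exact Finset.le_sup (f := (id : Finset ι → Finset ι))
              (mem_insert_of_mem (mem_erase.2 ⟨hTo, hT⟩)) hxT
  have hφψ : ∀ 𝒯 ∈ partitionsOf (insert i S), φ (ψ 𝒯) = 𝒯 := by
    intro 𝒯 h𝒯
    have h := mem_partitionsOf.1 h𝒯
    obtain ⟨B, hbo, hB, hiB, huniq, hsub, hBei⟩ := key 𝒯 h𝒯
    rw [hψ]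
    beta_reduce
    by_cases hBi : blockOf 𝒯 i = {i}
    · rw [if_pos hBi, hφ]
      rw [hbo] at hBi
      show insert (insert i ∅) ((𝒯.erase {i}).erase ∅) = 𝒯
      rw [insert_empty_eq, erase_eq_of_notMem
        (fun hc => h.empty_not_mem (mem_of_mem_erase hc)), insert_erase (hBi ▸ hB)]
    · rw [if_neg hBi, hφ]
      rw [hbo] at hBi ⊢
      show insert (insert i (B.erase i)) ((insert (B.erase i) (𝒯.erase B)).erase (B.erase i)) = 𝒯
      have hone : (B.erase i).Nonempty := by
        rcases (B.erase i).eq_empty_or_nonempty with he | hne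
        · rcases (Finset.erase_eq_empty_iff _ _).1 he with h' | h'
          · exact absurd (h' ▸ hiB) (notMem_empty i)
          · exact absurd h' hBi
        · exact hne
      have hnotmem : B.erase i ∉ 𝒯.erase B := by
        intro hc
        obtain ⟨x, hx⟩ := hone
        exact Finset.disjoint_left.1
          (h.2.1 _ (mem_of_mem_erase hc) B hB (mem_erase.1 hc).1) hx (mem_of_mem_erase hx)
      rw [Finset.erase_insert hnotmem, Finset.insert_erase hiB, Finset.insert_erase hB]
  have hψφ : ∀ x ∈ (partitionsOf S).sigma (fun Q => insert ∅ Q), ψ (φ x) = x := by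
    rintro ⟨Q, o⟩ hx
    rw [mem_sigma] at hx
    obtain ⟨hQ, ho⟩ := hx
    have h := mem_partitionsOf.1 hQ
    have hoS : o ⊆ S := by
      rcases mem_insert.1 ho with rfl | ho'
      · exact empty_subset S
      · exact h.subset_mem ho'
    have hio : i ∉ o := fun hc => hi (hoS hc)
    have hbo : blockOf (φ ⟨Q, o⟩) i = insert i o := by
      refine blockOf_eq (mem_insert_self _ _) (mem_insert_self i o) ?_
      intro T hT hiT
      rcases mem_insert.1 hT with rfl | hT'
      · rfl
      · exact absurd (h.subset_mem (mem_of_mem_erase hT') hiT) hi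
    have hins : insert i o ∉ Q.erase o :=
      fun hc => hi (h.subset_mem (mem_of_mem_erase hc) (mem_insert_self i o))
    rw [hψ]
    beta_reduce
    rcases mem_insert.1 ho with rfl | ho'
    · have hcond : blockOf (φ (⟨Q, ∅⟩ : (_ : Finset (Finset ι)) × Finset ι)) i = {i} := by
        rw [hbo, insert_empty_eq]
      rw [if_pos hcond]
      have hcomp : (φ (⟨Q, ∅⟩ : (_ : Finset (Finset ι)) × Finset ι)).erase {i} = Q := by
        show (insert (insert i ∅) (Q.erase ∅)).erase {i} = Q
        rw [insert_empty_eq, erase_eq_of_notMem h.empty_not_mem,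
          Finset.erase_insert (fun hc => hi (h.subset_mem hc (mem_singleton_self i)))]
      rw [hcomp]
    · have hone : o.Nonempty := h.nonempty_mem ho'
      have hcond : blockOf (φ (⟨Q, o⟩ : (_ : Finset (Finset ι)) × Finset ι)) i ≠ {i} := by
        rw [hbo]
        obtain ⟨x, hx⟩ := hone
        intro hc
        have : x ∈ ({i} : Finset ι) := hc ▸ mem_insert_of_mem hx
        exact hi (hoS (mem_singleton.1 this ▸ hx))
      rw [if_neg hcond, hbo]
      have h1 : (insert i o).erase i = o := Finset.erase_insert hio
      have h2 : (φ (⟨Q, o⟩ : (_ : Finset (Finset ι)) × Finset ι)).erase (insert i o)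
          = Q.erase o := by
        show (insert (insert i o) (Q.erase o)).erase (insert i o) = Q.erase o
        exact Finset.erase_insert hins
      rw [h1, h2, Finset.insert_erase ho']
  refine Finset.sum_nbij' ψ φ hψ_mem hφ_mem hφψ hψφ ?_
  intro 𝒯 h𝒯
  show F 𝒯 = F (φ (ψ 𝒯))
  rw [hφψ 𝒯 h𝒯]

end PIL


section TRANS
variable {ι ι' : Type*} [DecidableEq ι] [DecidableEq ι']

/-- Transport of sums over partitions along a map injective on the ground set. -/
lemma sum_partitionsOf_image {M : Type*} [AddCommMonoid M] {g : ι → ι'} {A : Finset ι}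
    (hg : Set.InjOn g A) (F : Finset (Finset ι') → M) :
    ∑ 𝒰 ∈ partitionsOf (A.image g), F 𝒰 =
      ∑ 𝒰 ∈ partitionsOf A, F (𝒰.image (fun V => V.image g)) := by
  classical
  set pb : Finset ι' → Finset ι := fun V => A.filter (fun a => g a ∈ V) with hpb
  have him : ∀ 𝒰 ∈ partitionsOf (A.image g), ∀ V ∈ 𝒰, (pb V).image g = V := by
    intro 𝒰 h𝒰 V hV
    have h := mem_partitionsOf.1 h𝒰
    ext x
    simp only [hpb, mem_image, mem_filter]
    constructor
    · rintro ⟨a, ⟨_, hgV⟩, rfl⟩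
      exact hgV
    · intro hxV
      obtain ⟨a, haA, rfl⟩ := mem_image.1 (h.subset_mem hV hxV)
      exact ⟨a, ⟨haA, hxV⟩, rfl⟩
  have hpb' : ∀ 𝒰₀ ∈ partitionsOf A, ∀ V₀ ∈ 𝒰₀, pb (V₀.image g) = V₀ := by
    intro 𝒰₀ h𝒰₀ V₀ hV₀
    have h := mem_partitionsOf.1 h𝒰₀
    ext a
    simp only [hpb, mem_filter, mem_image]
    constructor
    · rintro ⟨haA, b, hb, hba⟩
      rwa [hg (h.subset_mem hV₀ hb) haA hba] at hb
    · intro haV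
      exact ⟨h.subset_mem hV₀ haV, a, haV, rfl⟩
  refine Finset.sum_nbij' (fun 𝒰 => 𝒰.image pb) (fun 𝒰₀ => 𝒰₀.image (fun V => V.image g))
    ?_ ?_ ?_ ?_ ?_
  · -- pullback lands in partitions of A
    intro 𝒰 h𝒰
    have h := mem_partitionsOf.1 h𝒰
    rw [mem_partitionsOf]
    refine ⟨?_, ?_, ?_⟩
    · intro T hT
      obtain ⟨V, hV, rfl⟩ := mem_image.1 hT
      obtain ⟨x, hx⟩ := h.nonempty_mem hV
      obtain ⟨a, haA, rfl⟩ := mem_image.1 (h.subset_mem hV hx)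
      exact ⟨a, mem_filter.2 ⟨haA, hx⟩⟩
    · intro T hT T' hT' hne
      obtain ⟨V, hV, rfl⟩ := mem_image.1 hT
      obtain ⟨V', hV', rfl⟩ := mem_image.1 hT'
      have hVne : V ≠ V' := fun hc => hne (by rw [hc])
      rw [Finset.disjoint_left]
      intro a ha ha'
      exact Finset.disjoint_left.1 (h.2.1 V hV V' hV' hVne)
        (mem_filter.1 ha).2 (mem_filter.1 ha').2
    · apply le_antisymm
      · refine Finset.sup_le fun T hT => ?_
        obtain ⟨V, hV, rfl⟩ := mem_image.1 hT
        exact filter_subset _ A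
      · intro a ha
        have : g a ∈ A.image g := mem_image_of_mem g ha
        rw [← h.2.2] at this
        obtain ⟨V, hV, hgV⟩ : ∃ V ∈ 𝒰, g a ∈ V := by simpa using Finset.mem_sup.1 this
        exact Finset.le_sup (f := (id : Finset ι → Finset ι)) (mem_image_of_mem pb hV)
          (mem_filter.2 ⟨ha, hgV⟩)
  · -- pushforward lands in partitions of A.image g
    intro 𝒰₀ h𝒰₀
    have h := mem_partitionsOf.1 h𝒰₀
    rw [mem_partitionsOf]
    refine ⟨?_, ?_, ?_⟩
    · intro T hT
      obtain ⟨V₀, hV₀, rfl⟩ := mem_image.1 hT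
      exact (h.nonempty_mem hV₀).image g
    · intro T hT T' hT' hne
      obtain ⟨V₀, hV₀, rfl⟩ := mem_image.1 hT
      obtain ⟨V₀', hV₀', rfl⟩ := mem_image.1 hT'
      have hVne : V₀ ≠ V₀' := fun hc => hne (by rw [hc])
      rw [Finset.disjoint_left]
      rintro x hx hx'
      obtain ⟨a, ha, rfl⟩ := mem_image.1 hx
      obtain ⟨a', ha', haa⟩ := mem_image.1 hx'
      rw [hg (h.subset_mem hV₀' ha') (h.subset_mem hV₀ ha) haa] at ha'
      exact Finset.disjoint_left.1 (h.2.1 V₀ hV₀ V₀' hV₀' hVne) ha ha'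
    · apply le_antisymm
      · refine Finset.sup_le fun T hT => ?_
        obtain ⟨V₀, hV₀, rfl⟩ := mem_image.1 hT
        exact image_subset_image (h.subset_mem hV₀)
      · intro x hx
        obtain ⟨a, haA, rfl⟩ := mem_image.1 hx
        obtain ⟨V₀, hV₀, haV₀⟩ := h.exists_block haA
        exact Finset.le_sup (f := (id : Finset ι' → Finset ι'))
          (mem_image_of_mem _ hV₀) (mem_image_of_mem g haV₀)
  · intro 𝒰 h𝒰
    beta_reduce
    rw [Finset.image_image]
    calc 𝒰.image (fun V => (pb V).image g) = 𝒰.image id :=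
          Finset.image_congr fun V hV => him 𝒰 h𝒰 V hV
      _ = 𝒰 := Finset.image_id
  · intro 𝒰₀ h𝒰₀
    beta_reduce
    rw [Finset.image_image]
    calc 𝒰₀.image (fun V₀ => pb (V₀.image g)) = 𝒰₀.image id :=
          Finset.image_congr fun V₀ hV₀ => hpb' 𝒰₀ h𝒰₀ V₀ hV₀
      _ = 𝒰₀ := Finset.image_id
  · intro 𝒰 h𝒰
    beta_reduce
    congr 1
    rw [Finset.image_image]
    calc 𝒰 = 𝒰.image id := Finset.image_id.symm
      _ = 𝒰.image (fun V => (pb V).image g) :=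
          (Finset.image_congr fun V hV => him 𝒰 h𝒰 V hV).symm

end TRANS


section QS
variable {ι : Type*} [DecidableEq ι]

/-- Quasi-shuffle expansion of a product of `P`'s over all set partitions. -/
lemma prod_P_eq_sum_partitions (hadd : ∀ x y : R, P (x + y) = P x + P y)
    (hP : ∀ x y : R, P x * P y = P (x * P y) + P (P x * y) + P (x * y)) (a : ι → R)
    (S : Finset ι) :
    ∏ i ∈ S, P (a i) =
      ∑ 𝒯 ∈ partitionsOf S, sumNest P (fun T => ∏ j ∈ T, a j) 𝒯 := by
  induction S using Finset.induction_on with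
  | empty => simp [partitionsOf_empty]
  | @insert i S' hi ih =>
    rw [prod_insert hi, ih, mul_sum,
      sum_partitionsOf_insert (fun 𝒯 => sumNest P (fun T => ∏ j ∈ T, a j) 𝒯) hi]
    refine sum_congr rfl fun 𝒯₀ h𝒯₀ => ?_
    have h := mem_partitionsOf.1 h𝒯₀
    have hsing : ({i} : Finset ι) ∉ 𝒯₀ := fun hc => hi (h.subset_mem hc (mem_singleton_self i))
    have hins := ins P hadd hP 𝒯₀.card (fun T => ∏ j ∈ T, a j) {i} 𝒯₀ rfl hsing
    beta_reduce at hins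
    rw [prod_singleton] at hins
    rw [hins]
    congr 1
    refine sum_congr rfl fun T hT => ?_
    have hiT : i ∉ T := fun hc => hi (h.subset_mem hT hc)
    have himg : insert (insert i T) (𝒯₀.erase T)
        = 𝒯₀.image (fun V => if V = T then insert i T else V) := by
      ext W
      simp only [mem_insert, mem_image, mem_erase]
      constructor
      · rintro (rfl | ⟨hne, hW⟩)
        · exact ⟨T, hT, if_pos rfl⟩
        · exact ⟨W, hW, if_neg hne⟩
      · rintro ⟨V, hV, rfl⟩
        by_cases hVT : V = T
        · rw [if_pos hVT]; left; rfl
        · rw [if_neg hVT]; right; exact ⟨hVT, hV⟩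
    have hinj : Set.InjOn (fun V => if V = T then insert i T else V) 𝒯₀ := by
      intro V hV V' hV' hVV
      beta_reduce at hVV
      have hnotin : ∀ W ∈ 𝒯₀, W ≠ insert i T := by
        intro W hW hc
        exact hi (h.subset_mem hW (hc ▸ mem_insert_self i T))
      by_cases h1 : V = T <;> by_cases h2 : V' = T
      · rw [h1, h2]
      · rw [if_pos h1, if_neg h2] at hVV
        exact absurd hVV.symm (hnotin V' hV')
      · rw [if_neg h1, if_pos h2] at hVV
        exact absurd hVV (hnotin V hV)
      · rwa [if_neg h1, if_neg h2] at hVV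
    rw [himg, sumNest_image P _ _ hinj]
    apply sumNest_congr
    intro V hV
    by_cases hVT : V = T
    · subst hVT
      show Function.update (fun T => ∏ j ∈ T, a j) V (a i * ∏ j ∈ V, a j) V
          = ∏ j ∈ (if V = V then insert i V else V), a j
      rw [Function.update_self, if_pos rfl, prod_insert hiT]
    · show Function.update (fun T => ∏ j ∈ T, a j) T (a i * ∏ j ∈ T, a j) V
          = ∏ j ∈ (if V = T then insert i T else V), a j
      rw [Function.update_of_ne hVT, if_neg hVT]

end QS


section PARhelp
variable {ι : Type*} [DecidableEq ι]

lemma replace_eq_image {𝒯₀ : Finset (Finset ι)} {T B : Finset ι} (hT : T ∈ 𝒯₀) :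
    insert B (𝒯₀.erase T) = 𝒯₀.image (fun V => if V = T then B else V) := by
  ext W
  simp only [mem_insert, mem_image, mem_erase]
  constructor
  · rintro (rfl | ⟨hne, hW⟩)
    · exact ⟨T, hT, if_pos rfl⟩
    · exact ⟨W, hW, if_neg hne⟩
  · rintro ⟨V, hV, rfl⟩
    by_cases hVT : V = T
    · rw [if_pos hVT]; left; rfl
    · rw [if_neg hVT]; right; exact ⟨hVT, hV⟩

lemma replace_injOn {𝒯₀ : Finset (Finset ι)} {T B : Finset ι} (hB : B ∉ 𝒯₀) :
    Set.InjOn (fun V => if V = T then B else V) 𝒯₀ := by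
  have hB' : B ∉ (𝒯₀ : Set (Finset ι)) := by simpa using hB
  intro V hV V' hV' hVV
  beta_reduce at hVV
  by_cases h1 : V = T <;> by_cases h2 : V' = T
  · rw [h1, h2]
  · rw [if_pos h1, if_neg h2] at hVV
    exact absurd (hVV ▸ hV') hB'
  · rw [if_neg h1, if_pos h2] at hVV
    exact absurd (hVV.symm ▸ hV) hB'
  · rwa [if_neg h1, if_neg h2] at hVV

lemma image_image_injOn {κ κ' : Type*} [DecidableEq κ] [DecidableEq κ'] {g : κ → κ'}
    {A : Finset κ} (hg : Set.InjOn g A) {𝒰 : Finset (Finset κ)}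
    (hsub : ∀ V ∈ 𝒰, V ⊆ A) :
    Set.InjOn (fun V : Finset κ => V.image g) 𝒰 := by
  have key : ∀ V ∈ 𝒰, ∀ V' ∈ 𝒰, V.image g = V'.image g → V ⊆ V' := by
    intro V hV V' hV' hVV x hx
    have hgx : g x ∈ V'.image g := hVV ▸ mem_image_of_mem g hx
    obtain ⟨x', hx', he⟩ := mem_image.1 hgx
    rwa [hg (hsub V' hV' hx') (hsub V hV hx) he] at hx'
  intro V hV V' hV' hVV
  beta_reduce at hVV
  exact le_antisymm (key V (mem_coe.1 hV) V' (mem_coe.1 hV') hVV)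
    (key V' (mem_coe.1 hV') V (mem_coe.1 hV) hVV.symm)

lemma neg_one_pow_add_two (n : ℕ) : (-1 : ℤ) ^ (n + 2) = (-1) ^ n := by
  rw [pow_add]
  norm_num

lemma neg_one_pow_succ (n : ℕ) : (-1 : ℤ) ^ (n + 1) = -(-1) ^ n := by
  rw [pow_succ]
  ring

end PARhelp


section PAR
variable {ι : Type*} [DecidableEq ι]

noncomputable def inSum (a : ι → R) (𝒯 : Finset (Finset ι)) : R :=
  ∑ 𝒰 ∈ partitionsOf 𝒯,
    ((-1 : ℤ) ^ (𝒯.card + 𝒰.card) * ∏ V ∈ 𝒰, ((V.card - 1).factorial : ℤ)) •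
      ∏ V ∈ 𝒰, P (∏ j ∈ V.sup id, a j)

lemma sum_inSum (a : ι → R) (S : Finset ι) :
    ∑ 𝒯 ∈ partitionsOf S, inSum P a 𝒯 = ∏ i ∈ S, P (a i) := by
  induction S using Finset.induction_on with
  | empty =>
    rw [partitionsOf_empty, sum_singleton, prod_empty]
    unfold inSum
    rw [partitionsOf_empty, sum_singleton]
    simp
  | @insert i S hi ih =>
    rw [sum_partitionsOf_insert (inSum P a) hi, prod_insert hi, ← ih, mul_sum]
    refine sum_congr rfl fun Q hQ => ?_
    have hQp := mem_partitionsOf.1 hQ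
    have hQi : ({i} : Finset ι) ∉ Q := fun hc => hi (hQp.subset_mem hc (mem_singleton_self i))
    have hQcard : (insert {i} Q).card = Q.card + 1 := card_insert_of_notMem hQi
    have hfacts : ∀ 𝒰₀ ∈ partitionsOf Q, (∀ V ∈ 𝒰₀, V ⊆ Q)
        ∧ (∀ V ∈ 𝒰₀, i ∉ V.sup id) := by
      intro 𝒰₀ h𝒰₀
      have hU := mem_partitionsOf.1 h𝒰₀
      refine ⟨fun V hV => hU.subset_mem hV, fun V hV hj => ?_⟩
      obtain ⟨T, hT, hjT⟩ := Finset.mem_sup.1 hj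
      exact hi (hQp.subset_mem (hU.subset_mem hV hT) hjT)
    -- Sub-lemma 1 : the partitions with `{i}` inserted as an extra part
    have sub1 : inSum P a (insert {i} Q)
        = P (a i) * inSum P a Q
          + ∑ 𝒰₀ ∈ partitionsOf Q, ∑ W ∈ 𝒰₀,
              (-(W.card : ℤ) *
                ((-1 : ℤ) ^ (Q.card + 𝒰₀.card) * ∏ V ∈ 𝒰₀, ((V.card - 1).factorial : ℤ))) •
              (P (a i * ∏ j ∈ W.sup id, a j) *
                ∏ V ∈ 𝒰₀.erase W, P (∏ j ∈ V.sup id, a j)) := by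
      unfold inSum
      rw [sum_partitionsOf_insert
        (fun 𝒰 => ((-1 : ℤ) ^ ((insert {i} Q).card + 𝒰.card)
          * ∏ V ∈ 𝒰, ((V.card - 1).factorial : ℤ)) • ∏ V ∈ 𝒰, P (∏ j ∈ V.sup id, a j)) hQi,
        mul_sum, ← sum_add_distrib]
      refine sum_congr rfl fun 𝒰₀ h𝒰₀ => ?_
      obtain ⟨hblocksub, hiV⟩ := hfacts 𝒰₀ h𝒰₀
      have hsingU : ({({i} : Finset ι)} : Finset (Finset ι)) ∉ 𝒰₀ :=
        fun hc => hQi (hblocksub _ hc (mem_singleton_self _))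
      congr 1
      · -- new singleton block
        beta_reduce
        rw [card_insert_of_notMem hsingU, prod_insert hsingU, prod_insert hsingU,
          Finset.sup_singleton]
        have he : (-1 : ℤ) ^ ((insert {i} Q).card + (𝒰₀.card + 1))
            = (-1) ^ (Q.card + 𝒰₀.card) := by
          rw [hQcard, show Q.card + 1 + (𝒰₀.card + 1) = Q.card + 𝒰₀.card + 2 by omega]
          exact neg_one_pow_add_two _
        rw [he, mul_smul_comm]
        simp [Nat.factorial]
      · -- merged blocks
        refine sum_congr rfl fun W hW => ?_
        beta_reduce
        have hWQ : W ⊆ Q := hblocksub W hW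
        have hiW : ({i} : Finset ι) ∉ W := fun hc => hQi (hWQ hc)
        have hnot : insert ({i} : Finset ι) W ∉ 𝒰₀.erase W :=
          fun hc => hQi (hblocksub _ (mem_of_mem_erase hc) (mem_insert_self _ _))
        have hcardI : (insert (insert ({i} : Finset ι) W) (𝒰₀.erase W)).card = 𝒰₀.card := by
          rw [card_insert_of_notMem hnot, card_erase_of_mem hW]
          exact Nat.succ_pred_eq_of_pos (card_pos.2 ⟨W, hW⟩)
        have he : (-1 : ℤ) ^ ((insert {i} Q).card + 𝒰₀.card)
            = -(-1) ^ (Q.card + 𝒰₀.card) := by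
          rw [hQcard, show Q.card + 1 + 𝒰₀.card = Q.card + 𝒰₀.card + 1 by omega]
          exact neg_one_pow_succ _
        have hfacNat : W.card.factorial = W.card * (W.card - 1).factorial := by
          have hWc : W.card = (W.card - 1) + 1 :=
            (Nat.succ_pred_eq_of_pos (card_pos.2 ((mem_partitionsOf.1 h𝒰₀).nonempty_mem hW))).symm
          conv_lhs => rw [hWc, Nat.factorial_succ, ← hWc]
        have hfac : ∏ V ∈ insert (insert ({i} : Finset ι) W) (𝒰₀.erase W),
              ((V.card - 1).factorial : ℤ)
            = (W.card : ℤ) * ∏ V ∈ 𝒰₀, ((V.card - 1).factorial : ℤ) := by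
          rw [prod_insert hnot, card_insert_of_notMem hiW, Nat.add_sub_cancel,
            ← Finset.mul_prod_erase 𝒰₀ _ hW, hfacNat]
          push_cast
          ring
        have hsup : (insert ({i} : Finset ι) W).sup id = insert i (W.sup id) := by
          rw [Finset.sup_insert]
          show ({i} : Finset ι) ⊔ W.sup id = _
          rw [Finset.sup_eq_union, ← Finset.insert_eq]
        have hprodP : ∏ V ∈ insert (insert ({i} : Finset ι) W) (𝒰₀.erase W),
              P (∏ j ∈ V.sup id, a j)
            = P (a i * ∏ j ∈ W.sup id, a j) *
                ∏ V ∈ 𝒰₀.erase W, P (∏ j ∈ V.sup id, a j) := by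
          rw [prod_insert hnot, hsup, prod_insert (hiV W hW)]
        rw [hcardI, he, hfac, hprodP]
        congr 1
        ring
    -- Sub-lemma 2 : partitions where `i` was merged into the block `T`
    have sub2 : ∀ T ∈ Q, inSum P a (insert (insert i T) (Q.erase T))
        = ∑ 𝒰₀ ∈ partitionsOf Q,
            ((-1 : ℤ) ^ (Q.card + 𝒰₀.card) * ∏ V ∈ 𝒰₀, ((V.card - 1).factorial : ℤ)) •
              ∏ V ∈ 𝒰₀, P ((if T ∈ V then a i else 1) * ∏ j ∈ V.sup id, a j) := by
      intro T hT
      have hgT : Set.InjOn (fun V => if V = T then insert i T else V) Q :=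
        replace_injOn (fun hc => hi (hQp.subset_mem hc (mem_insert_self i T)))
      have himg : insert (insert i T) (Q.erase T)
          = Q.image (fun V => if V = T then insert i T else V) := replace_eq_image hT
      unfold inSum
      rw [himg, sum_partitionsOf_image hgT
        (fun 𝒰 => ((-1 : ℤ) ^ ((Q.image (fun V => if V = T then insert i T else V)).card
            + 𝒰.card) * ∏ V ∈ 𝒰, ((V.card - 1).factorial : ℤ)) •
          ∏ V ∈ 𝒰, P (∏ j ∈ V.sup id, a j))]
      refine sum_congr rfl fun 𝒰₀ h𝒰₀ => ?_
      beta_reduce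
      obtain ⟨hblocksub, hiV⟩ := hfacts 𝒰₀ h𝒰₀
      have hII : Set.InjOn (fun V : Finset (Finset ι) =>
          V.image (fun V => if V = T then insert i T else V)) 𝒰₀ :=
        image_image_injOn hgT hblocksub
      have hc1 : (Q.image (fun V => if V = T then insert i T else V)).card = Q.card :=
        card_image_of_injOn hgT
      have hc2 : (𝒰₀.image (fun V : Finset (Finset ι) =>
          V.image (fun V => if V = T then insert i T else V))).card = 𝒰₀.card :=
        card_image_of_injOn hII
      rw [hc1, hc2, prod_image (fun x hx y hy => hII hx hy),
        prod_image (fun x hx y hy => hII hx hy)]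
      have hfac : ∀ V ∈ 𝒰₀,
          (((V.image (fun V => if V = T then insert i T else V)).card - 1).factorial : ℤ)
            = ((V.card - 1).factorial : ℤ) := by
        intro V hV
        rw [card_image_of_injOn (hgT.mono (by exact_mod_cast hblocksub V hV))]
      have hsupim : ∀ V ∈ 𝒰₀,
          P (∏ j ∈ (V.image (fun V => if V = T then insert i T else V)).sup id, a j)
            = P ((if T ∈ V then a i else 1) * ∏ j ∈ V.sup id, a j) := by
        intro V hV
        rw [Finset.sup_image]
        by_cases hTV : T ∈ V
        · have hsupV : V.sup (id ∘ fun V => if V = T then insert i T else V)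
              = insert i (V.sup id) := by
            conv_lhs => rw [← insert_erase hTV]
            conv_rhs => rw [← insert_erase hTV]
            rw [Finset.sup_insert, Finset.sup_insert]
            have h1 : (id ∘ fun V => if V = T then insert i T else V) T = insert i T := by
              simp
            have h2 : (V.erase T).sup (id ∘ fun V => if V = T then insert i T else V)
                = (V.erase T).sup id := by
              refine Finset.sup_congr rfl fun W hW => ?_
              simp only [Function.comp_apply, id_eq, if_neg (mem_erase.1 hW).1]
            rw [h1, h2]
            show insert i T ⊔ _ = insert i (id T ⊔ _)
            rw [id_eq, Finset.sup_eq_union, Finset.insert_union, Finset.sup_eq_union]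
          rw [hsupV, if_pos hTV, prod_insert (hiV V hV)]
        · have hsupV : V.sup (id ∘ fun V => if V = T then insert i T else V) = V.sup id := by
            refine Finset.sup_congr rfl fun W hW => ?_
            have hWT : W ≠ T := fun h => hTV (h ▸ hW)
            simp only [Function.comp_apply, id_eq, if_neg hWT]
          rw [hsupV, if_neg hTV, one_mul]
      rw [prod_congr rfl hfac, prod_congr rfl hsupim]
    rw [sum_congr rfl sub2, sub1]
    -- swap the double sum coming from sub2 and regroup
    have sub2sum : ∑ T ∈ Q, ∑ 𝒰₀ ∈ partitionsOf Q,
          ((-1 : ℤ) ^ (Q.card + 𝒰₀.card) * ∏ V ∈ 𝒰₀, ((V.card - 1).factorial : ℤ)) •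
            ∏ V ∈ 𝒰₀, P ((if T ∈ V then a i else 1) * ∏ j ∈ V.sup id, a j)
        = ∑ 𝒰₀ ∈ partitionsOf Q, ∑ W ∈ 𝒰₀,
            ((W.card : ℤ) *
              ((-1 : ℤ) ^ (Q.card + 𝒰₀.card) * ∏ V ∈ 𝒰₀, ((V.card - 1).factorial : ℤ))) •
            (P (a i * ∏ j ∈ W.sup id, a j) *
              ∏ V ∈ 𝒰₀.erase W, P (∏ j ∈ V.sup id, a j)) := by
      rw [Finset.sum_comm]
      refine sum_congr rfl fun 𝒰₀ h𝒰₀ => ?_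
      have hU := mem_partitionsOf.1 h𝒰₀
      have hinner : ∀ W ∈ 𝒰₀, ∀ T ∈ W,
          ∏ V ∈ 𝒰₀, P ((if T ∈ V then a i else 1) * ∏ j ∈ V.sup id, a j)
            = P (a i * ∏ j ∈ W.sup id, a j) *
                ∏ V ∈ 𝒰₀.erase W, P (∏ j ∈ V.sup id, a j) := by
        intro W hW T hTW
        rw [← Finset.mul_prod_erase 𝒰₀ _ hW, if_pos hTW]
        congr 1
        refine prod_congr rfl fun V hV => ?_
        have hTV : T ∉ V := by
          intro hc
          exact (mem_erase.1 hV).1 (hU.unique_block (mem_of_mem_erase hV) hW hc hTW)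
        rw [if_neg hTV, one_mul]
      rw [hU.sum_partition]
      refine sum_congr rfl fun W hW => ?_
      rw [sum_congr rfl fun T hTW => by rw [hinner W hW T hTW], sum_const, ← natCast_zsmul,
        smul_smul]
    rw [sub2sum, add_assoc, ← sum_add_distrib]
    have hzero : ∑ 𝒰₀ ∈ partitionsOf Q, (∑ W ∈ 𝒰₀,
          (-(W.card : ℤ) *
            ((-1 : ℤ) ^ (Q.card + 𝒰₀.card) * ∏ V ∈ 𝒰₀, ((V.card - 1).factorial : ℤ))) •
          (P (a i * ∏ j ∈ W.sup id, a j) *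
            ∏ V ∈ 𝒰₀.erase W, P (∏ j ∈ V.sup id, a j))
        + ∑ W ∈ 𝒰₀,
          ((W.card : ℤ) *
            ((-1 : ℤ) ^ (Q.card + 𝒰₀.card) * ∏ V ∈ 𝒰₀, ((V.card - 1).factorial : ℤ))) •
          (P (a i * ∏ j ∈ W.sup id, a j) *
            ∏ V ∈ 𝒰₀.erase W, P (∏ j ∈ V.sup id, a j))) = 0 := by
      refine sum_eq_zero fun 𝒰₀ h𝒰₀ => ?_
      rw [← sum_add_distrib]
      refine sum_eq_zero fun W hW => ?_
      rw [← add_smul]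
      have : -(W.card : ℤ) *
            ((-1 : ℤ) ^ (Q.card + 𝒰₀.card) * ∏ V ∈ 𝒰₀, ((V.card - 1).factorial : ℤ))
          + (W.card : ℤ) *
            ((-1 : ℤ) ^ (Q.card + 𝒰₀.card) * ∏ V ∈ 𝒰₀, ((V.card - 1).factorial : ℤ)) = 0 := by
        ring
      rw [this, zero_smul]
    rw [hzero, add_zero]

end PAR


section LemB
universe u

lemma sumNest_eq_partitions (hadd : ∀ x y : R, P (x + y) = P x + P y)
    (hP : ∀ x y : R, P x * P y = P (x * P y) + P (P x * y) + P (x * y)) :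
    ∀ (n : ℕ) {κ : Type u} [DecidableEq κ] (y : κ → R) (U : Finset κ), U.card ≤ n →
      sumNest P y U =
        ∑ 𝒯 ∈ partitionsOf U,
          ((-1 : ℤ) ^ (U.card + 𝒯.card) * ∏ T ∈ 𝒯, ((T.card - 1).factorial : ℤ)) •
            ∏ T ∈ 𝒯, P (∏ j ∈ T, y j) := by
  intro n
  induction n with
  | zero =>
    intro κ _ y U hU
    rw [Nat.le_zero, card_eq_zero] at hU
    subst hU
    rw [partitionsOf_empty, sum_singleton, sumNest_empty]
    simp
  | succ n ih =>
    intro κ _ y U hcard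
    rcases U.eq_empty_or_nonempty with rfl | hU
    · rw [partitionsOf_empty, sum_singleton, sumNest_empty]
      simp
    have hdisc := singletons_mem_partitionsOf U
    have hsingInj : Set.InjOn (fun x : κ => ({x} : Finset κ)) U :=
      fun x _ x' _ h => singleton_injective h
    -- `sumNest` over the discrete partition is `sumNest` over `U`
    have hdiscval : sumNest P (fun T => ∏ j ∈ T, y j) (U.image fun x => ({x} : Finset κ))
        = sumNest P y U := by
      rw [sumNest_image P _ _ hsingInj]
      exact sumNest_congr P fun t ht => by rw [prod_singleton]
    -- quasi-shuffle expansion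
    have hQS := prod_P_eq_sum_partitions P hadd hP y U
    rw [← Finset.add_sum_erase _ _ hdisc, hdiscval] at hQS
    -- rewrite the small terms using the induction hypothesis
    have hsmall : ∀ 𝒯 ∈ (partitionsOf U).erase (U.image fun x => ({x} : Finset κ)),
        sumNest P (fun T => ∏ j ∈ T, y j) 𝒯 = inSum P y 𝒯 := by
      intro 𝒯 h𝒯
      have h𝒯p := mem_partitionsOf.1 (mem_of_mem_erase h𝒯)
      have hlt : 𝒯.card < U.card := by
        rcases lt_or_eq_of_le h𝒯p.card_le with h | h
        · exact h
        · exact absurd (h𝒯p.eq_singletons h) (mem_erase.1 h𝒯).1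
      have h𝒯n : 𝒯.card ≤ n := by omega
      rw [ih _ 𝒯 h𝒯n]
      unfold inSum
      refine sum_congr rfl fun 𝒰 h𝒰 => ?_
      congr 1
      refine prod_congr rfl fun V hV => ?_
      congr 1
      have hVsub := (mem_partitionsOf.1 h𝒰).subset_mem hV
      have hpd : (↑V : Set (Finset κ)).PairwiseDisjoint id :=
        fun T hT T' hT' hne => h𝒯p.2.1 T (hVsub hT) T' (hVsub hT') hne
      rw [sup_eq_biUnion, prod_biUnion hpd]
      exact prod_congr rfl fun T hT => rfl
    rw [sum_congr rfl hsmall] at hQS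
    -- the partition identity
    have hPAR := sum_inSum P y U
    rw [← Finset.add_sum_erase _ _ hdisc] at hPAR
    -- `inSum` over the discrete partition is the target sum
    have hdiscIn : inSum P y (U.image fun x => ({x} : Finset κ))
        = ∑ 𝒯 ∈ partitionsOf U,
            ((-1 : ℤ) ^ (U.card + 𝒯.card) * ∏ T ∈ 𝒯, ((T.card - 1).factorial : ℤ)) •
              ∏ T ∈ 𝒯, P (∏ j ∈ T, y j) := by
      unfold inSum
      rw [sum_partitionsOf_image hsingInj
        (fun 𝒰 => ((-1 : ℤ) ^ ((U.image fun x => ({x} : Finset κ)).card + 𝒰.card)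
            * ∏ V ∈ 𝒰, ((V.card - 1).factorial : ℤ)) •
          ∏ V ∈ 𝒰, P (∏ j ∈ V.sup id, y j))]
      refine sum_congr rfl fun 𝒯 h𝒯 => ?_
      beta_reduce
      have h𝒯p := mem_partitionsOf.1 h𝒯
      have hblocksub : ∀ T ∈ 𝒯, T ⊆ U := fun T hT => h𝒯p.subset_mem hT
      have hII : Set.InjOn (fun V : Finset κ => V.image fun x => ({x} : Finset κ)) 𝒯 :=
        image_image_injOn hsingInj hblocksub
      rw [card_image_of_injOn hsingInj, card_image_of_injOn hII,
        prod_image (fun x hx y hy => hII hx hy), prod_image (fun x hx y hy => hII hx hy)]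
      congr 1
      · congr 1
        refine prod_congr rfl fun T hT => ?_
        rw [card_image_of_injOn (hsingInj.mono (by exact_mod_cast hblocksub T hT))]
      · refine prod_congr rfl fun T hT => ?_
        congr 1
        have hsupT : (T.image fun x => ({x} : Finset κ)).sup id = T := by
          ext j
          rw [Finset.mem_sup]
          constructor
          · rintro ⟨W, hW, hjW⟩
            obtain ⟨x, hx, rfl⟩ := mem_image.1 hW
            have hjx : j = x := by simpa using hjW
            exact hjx ▸ hx
          · intro hj
            exact ⟨{j}, mem_image_of_mem _ hj, mem_singleton_self j⟩
        rw [hsupT]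
    rw [hdiscIn] at hPAR
    -- combine
    have hcancel : sumNest P y U +
          ∑ 𝒯 ∈ (partitionsOf U).erase (U.image fun x => ({x} : Finset κ)), inSum P y 𝒯
        = (∑ 𝒯 ∈ partitionsOf U,
            ((-1 : ℤ) ^ (U.card + 𝒯.card) * ∏ T ∈ 𝒯, ((T.card - 1).factorial : ℤ)) •
              ∏ T ∈ 𝒯, P (∏ j ∈ T, y j)) +
          ∑ 𝒯 ∈ (partitionsOf U).erase (U.image fun x => ({x} : Finset κ)), inSum P y 𝒯 := by
      rw [← hQS, hPAR]
    exact add_right_cancel hcancel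

end LemB

section LemA

lemma sum_perm_eq_sumNest (hadd : ∀ x y : R, P (x + y) = P x + P y) :
    ∀ (n : ℕ) (s : Fin n → R),
      ∑ σ : Equiv.Perm (Fin n), nestedRB P (List.ofFn fun i => s (σ i))
        = sumNest P s Finset.univ := by
  intro n
  induction n with
  | zero =>
    intro s
    rw [Finset.univ_eq_empty (α := Fin 0), sumNest_empty]
    simp [List.ofFn_zero, nestedRB]
  | succ n ih =>
    intro s
    rw [← Equiv.sum_comp (Equiv.Perm.decomposeFin.symm : _ ≃ Equiv.Perm (Fin (n + 1)))
      (fun σ => nestedRB P (List.ofFn fun i => s (σ i))), Fintype.sum_prod_type]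
    rw [sumNest_nonempty P s Finset.univ_nonempty]
    refine Finset.sum_congr rfl fun p _ => ?_
    have hlist : ∀ τ : Equiv.Perm (Fin n),
        (List.ofFn fun i => s ((Equiv.Perm.decomposeFin.symm (p, τ)) i))
          = s p :: List.ofFn (fun i => s (Equiv.swap 0 p ((τ i)).succ)) := by
      intro τ
      rw [List.ofFn_succ]
      congr 1
      · rw [Equiv.Perm.decomposeFin_symm_apply_zero]
      · congr 1
        funext i
        rw [Equiv.Perm.decomposeFin_symm_apply_succ]
    calc ∑ τ : Equiv.Perm (Fin n),
          nestedRB P (List.ofFn fun i => s ((Equiv.Perm.decomposeFin.symm (p, τ)) i))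
        = ∑ τ : Equiv.Perm (Fin n),
            P (s p * nestedRB P (List.ofFn (fun i => s (Equiv.swap 0 p ((τ i)).succ)))) := by
          refine Finset.sum_congr rfl fun τ _ => ?_
          rw [hlist τ]
          rfl
      _ = P (s p * ∑ τ : Equiv.Perm (Fin n),
            nestedRB P (List.ofFn (fun i => s (Equiv.swap 0 p ((τ i)).succ)))) := by
          rw [← P_sum hadd, ← mul_sum]
      _ = P (s p * sumNest P s (Finset.univ.erase p)) := by
          congr 1
          have hih := ih (fun j => s (Equiv.swap 0 p j.succ))
          rw [hih]
          congr 1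
          have hginj : Set.InjOn (fun j : Fin n => Equiv.swap 0 p j.succ)
              (Finset.univ : Finset (Fin n)) := by
            intro x _ x' _ hxx
            exact Fin.succ_injective n ((Equiv.swap 0 p).injective hxx)
          have h2 := sumNest_image P s (fun j : Fin n => Equiv.swap 0 p j.succ) hginj
          beta_reduce at h2
          have himg : (Finset.univ : Finset (Fin n)).image
              (fun j : Fin n => Equiv.swap 0 p j.succ) = Finset.univ.erase p := by
            ext x
            simp only [mem_image, mem_erase, mem_univ, and_true, true_and]
            constructor
            · rintro ⟨j, _, rfl⟩
              intro hc
              have hj := congrArg (Equiv.swap 0 p) hc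
              rw [Equiv.swap_apply_self, Equiv.swap_apply_right] at hj
              exact Fin.succ_ne_zero j hj
            · intro hx
              have hne : Equiv.swap 0 p x ≠ 0 := by
                intro hc
                apply hx
                have := congrArg (Equiv.swap 0 p) hc
                rwa [Equiv.swap_apply_self, Equiv.swap_apply_left] at this
              obtain ⟨j, hj⟩ : ∃ j : Fin n, j.succ = Equiv.swap 0 p x := by
                rcases Fin.eq_succ_of_ne_zero hne with ⟨j, hj⟩
                exact ⟨j, hj.symm⟩
              refine ⟨j, ?_⟩
              show Equiv.swap 0 p j.succ = x
              rw [hj, Equiv.swap_apply_self]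
          rw [← himg, h2]

end LemA

end BS

/-- **Bohnenblust–Spitzer formula.**  For an additive Rota–Baxter operator `P` of
weight 1 on a commutative ring `R` and `s₁, …, sₙ ∈ R` (`n ≥ 1`),
`∑_{σ ∈ Sₙ} P(s_{σ(1)}·P(s_{σ(2)}·(⋯·P(s_{σ(n)})⋯)))
  = ∑_𝒯 (−1)^{n−|𝒯|} ∏_{T∈𝒯}(|T|−1)! · ∏_{T∈𝒯} P(∏_{j∈T} s_j)`,
the right sum being over all unordered set partitions `𝒯` of `{1,…,n}` into
nonempty blocks. -/
theorem bohnenblust_spitzer {R : Type*} [CommRing R] (P : R → R)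
    (hadd : ∀ x y : R, P (x + y) = P x + P y)
    (hP : ∀ x y : R, P x * P y = P (x * P y) + P (P x * y) + P (x * y))
    (n : ℕ) (hn : 1 ≤ n) (s : Fin n → R) :
    ∑ σ : Equiv.Perm (Fin n), nestedRB P (List.ofFn fun i => s (σ i)) =
      ∑ 𝒯 ∈ (Finset.univ : Finset (Finset (Finset (Fin n)))).filter
          (fun 𝒯 => (∀ T ∈ 𝒯, T.Nonempty) ∧
            (∀ T ∈ 𝒯, ∀ T' ∈ 𝒯, T ≠ T' → Disjoint T T') ∧
            𝒯.sup id = Finset.univ),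
        ((-1 : ℤ) ^ (n - 𝒯.card) * ∏ T ∈ 𝒯, ((T.card - 1).factorial : ℤ)) •
          ∏ T ∈ 𝒯, P (∏ j ∈ T, s j) := by
  classical
  have hcard : (Finset.univ : Finset (Fin n)).card = n := by
    rw [Finset.card_univ, Fintype.card_fin]
  rw [BS.sum_perm_eq_sumNest P hadd n s,
    BS.sumNest_eq_partitions P hadd hP n s Finset.univ (le_of_eq hcard)]
  have hset : BS.partitionsOf (Finset.univ : Finset (Fin n))
      = (Finset.univ : Finset (Finset (Finset (Fin n)))).filter
          (fun 𝒯 => (∀ T ∈ 𝒯, T.Nonempty) ∧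
            (∀ T ∈ 𝒯, ∀ T' ∈ 𝒯, T ≠ T' → Disjoint T T') ∧
            𝒯.sup id = Finset.univ) := by
    ext 𝒯
    rw [BS.mem_partitionsOf, Finset.mem_filter]
    exact ⟨fun h => ⟨Finset.mem_univ 𝒯, h.1, h.2.1, h.2.2⟩,
      fun h => ⟨h.2.1, h.2.2.1, h.2.2.2⟩⟩
  rw [hset]
  refine Finset.sum_congr rfl fun 𝒯 h𝒯 => ?_
  have h𝒯p : BS.IsPartition Finset.univ 𝒯 := by
    have h := (Finset.mem_filter.1 h𝒯).2
    exact ⟨h.1, h.2.1, h.2.2⟩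
  have hk : 𝒯.card ≤ n := le_trans h𝒯p.card_le (le_of_eq hcard)
  have hco : ((-1 : ℤ) ^ ((Finset.univ : Finset (Fin n)).card + 𝒯.card))
      = (-1 : ℤ) ^ (n - 𝒯.card) := by
    rw [hcard, show n + 𝒯.card = (n - 𝒯.card) + 2 * 𝒯.card from by omega, pow_add, pow_mul]
    norm_num
  rw [hco]
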